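/- Let Γ be a simple digraph on n vertices and k an integer with Z(Γ) ≤ k ≤ n. Then pt_k(Γ) = pt_k(Γᵀ), where pt_k denotes the minimum propagation time over zero forcing sets of size exactly k. -/
import Mathlib


open Set

/-- One time step of standard zero forcing on a digraph with arc relation `A`:
every blue vertex having a unique white out-neighbor forces it blue. -/
def dstep {V : Type*} (A : V → V → Prop) (S : Set V) : Set V :=
  S ∪ {w | ∃ u ∈ S, A u w ∧ ∀ x, A u x → x ∉ S → x = w}

/-- `B` is a zero forcing set of the digraph with arc relation `A`. -/
def IsZFS {V : Type*} (A : V → V → Prop) (B : Set V) : Prop :=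
  ∃ t, (dstep A)^[t] B = Set.univ

/-- Propagation time of `B` in the digraph with arc relation `A`. -/
noncomputable def dpt {V : Type*} (A : V → V → Prop) (B : Set V) : ℕ :=
  sInf {t | (dstep A)^[t] B = Set.univ}

/-- The throttling number of the digraph with arc relation `A`. -/
noncomputable def dth {V : Type*} (A : V → V → Prop) : ℕ :=
  sInf {k | ∃ B : Set V, IsZFS A B ∧ k = B.ncard + dpt A B}

/-- The zero forcing number. -/
noncomputable def Znum {V : Type*} (A : V → V → Prop) : ℕ :=
  sInf {k | ∃ B : Set V, IsZFS A B ∧ B.ncard = k}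

/-- The `k`-propagation time: minimum propagation time over zero forcing sets of size `k`. -/
noncomputable def ptk {V : Type*} (A : V → V → Prop) (k : ℕ) : ℕ :=
  sInf {t | ∃ B : Set V, IsZFS A B ∧ B.ncard = k ∧ dpt A B = t}

lemma dstep_subset {V : Type*} (A : V → V → Prop) (S : Set V) : S ⊆ dstep A S :=
  subset_union_left

lemma dstep_mono {V : Type*} (A : V → V → Prop) {S T : Set V} (h : S ⊆ T) :
    dstep A S ⊆ dstep A T := by
  apply union_subset_union h
  rintro w ⟨u, hu, hA, hx⟩
  exact ⟨u, h hu, hA, fun x hax hxT => hx x hax (fun hxS => hxT (h hxS))⟩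

lemma iter_mono_time {V : Type*} (A : V → V → Prop) (B : Set V) :
    Monotone fun t => (dstep A)^[t] B := by
  apply monotone_nat_of_le_succ
  intro n
  rw [Function.iterate_succ_apply']
  exact dstep_subset A _

lemma iter_mono_set {V : Type*} (A : V → V → Prop) {B C : Set V} (h : B ⊆ C) (t : ℕ) :
    (dstep A)^[t] B ⊆ (dstep A)^[t] C := by
  induction t with
  | zero => exact h
  | succ n ih =>
    rw [Function.iterate_succ_apply', Function.iterate_succ_apply']
    exact dstep_mono A ih

/-- The reversal lemma: from a zero forcing set of `A` we get one of `flip A` of the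
same size whose propagation time is no larger. -/
lemma reversal {V : Type*} [Fintype V] (A : V → V → Prop) (B : Set V) (hZ : IsZFS A B) :
    ∃ B' : Set V, IsZFS (flip A) B' ∧ B'.ncard = B.ncard ∧ dpt (flip A) B' ≤ dpt A B := by
  classical
  set p := dpt A B with hpdef
  have hp : (dstep A)^[p] B = univ := Nat.sInf_mem hZ
  set S : ℕ → Set V := fun t => (dstep A)^[t] B with hS
  have hmono : ∀ {a b : ℕ}, a ≤ b → S a ⊆ S b := fun h => iter_mono_time A B h
  set τ : V → ℕ := fun y => sInf {t | y ∈ S (t + 1)} with hτ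
  have hτ1 : ∀ y ∉ B, y ∈ S (τ y + 1) := by
    intro y hy
    have hne : {t | y ∈ S (t + 1)}.Nonempty := by
      rcases Nat.eq_zero_or_pos p with h0 | h0
      · exfalso
        apply hy
        have : S 0 = univ := by rw [← h0]; exact hp
        rw [show B = S 0 from rfl, this]; trivial
      · exact ⟨p - 1, by simp only [mem_setOf_eq, Nat.sub_add_cancel h0, hS, hp]; trivial⟩
    exact Nat.sInf_mem hne
  have hτ2 : ∀ y ∉ B, y ∉ S (τ y) := by
    intro y hy
    rcases hm : τ y with _ | m
    · exact hy
    · have hlt : m < τ y := by omega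
      have := Nat.notMem_of_lt_sInf (s := {t | y ∈ S (t + 1)}) hlt
      simpa using this
  have hτ3 : ∀ y ∉ B, τ y < p := by
    intro y hy
    by_contra hle
    push_neg at hle
    exact hτ2 y hy (hmono hle (by rw [show S p = univ from hp]; trivial))
  have hgex : ∀ y, y ∉ B → ∃ u, u ∈ S (τ y) ∧ A u y ∧ ∀ x, A u x → x ∉ S (τ y) → x = y := by
    intro y hy
    have h1 := hτ1 y hy
    have hstep : S (τ y + 1) = dstep A (S (τ y)) := by
      simp only [hS, Function.iterate_succ_apply']
    rw [hstep] at h1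
    rcases h1 with h | ⟨u, hu, hA, hux⟩
    · exact absurd h (hτ2 y hy)
    · exact ⟨u, hu, hA, hux⟩
  choose! g hg1 hg2 hg3 using hgex
  have hinj : Set.InjOn g Bᶜ := by
    intro y hy y' hy' hgy
    rcases le_total (τ y) (τ y') with h | h
    · have : y' = y := hg3 y hy y' (by rw [hgy]; exact hg2 y' hy')
        (fun hmem => (hτ2 y' hy') (hmono h hmem))
      exact this.symm
    · exact hg3 y' hy' y (by rw [← hgy]; exact hg2 y hy)
        (fun hmem => (hτ2 y hy) (hmono h hmem))
  set B' : Set V := (g '' Bᶜ)ᶜ with hB'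
  have hmemB' : ∀ v : V, v ∉ B' → ∃ z, z ∉ B ∧ g z = v := by
    intro v hv
    have : v ∈ g '' Bᶜ := by simpa [hB'] using hv
    obtain ⟨z, hz, hgz⟩ := this
    exact ⟨z, hz, hgz⟩
  have hcard : B'.ncard = B.ncard := by
    have h1 : (g '' Bᶜ).ncard = Bᶜ.ncard := Set.ncard_image_of_injOn hinj
    have h2 := Set.ncard_add_ncard_compl B
    have h3 := Set.ncard_add_ncard_compl (g '' Bᶜ)
    rw [← hB'] at h3
    omega
  set R : ℕ → Set V := fun j => (dstep (flip A))^[j] B' with hR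
  have hRmono : ∀ {a b : ℕ}, a ≤ b → R a ⊆ R b := fun h => iter_mono_time (flip A) B' h
  have hB'R : ∀ j, B' ⊆ R j := fun j => hRmono (Nat.zero_le j)
  have key : ∀ d, ∀ y, y ∉ B → p - τ y ≤ d → g y ∈ R (p - τ y) := by
    intro d
    induction d with
    | zero =>
      intro y hy hle
      exfalso
      have := hτ3 y hy
      omega
    | succ d ih =>
      intro y hy hle
      have htp : τ y < p := hτ3 y hy
      have hstep : p - τ y = (p - τ y - 1) + 1 := by omega
      rw [hstep]
      have hRsucc : R ((p - τ y - 1) + 1) = dstep (flip A) (R (p - τ y - 1)) := by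
        simp only [hR, Function.iterate_succ_apply']
      rw [hRsucc]
      refine Or.inr ⟨y, ?_, hg2 y hy, ?_⟩
      · -- y is blue in the reversed process at time p - τ y - 1
        by_cases hyB' : y ∈ B'
        · exact hB'R _ hyB'
        · obtain ⟨z, hz, hgz⟩ := hmemB' y hyB'
          have hzt : τ y < τ z := by
            by_contra hle'
            push_neg at hle'
            exact (hτ2 y hy) (hmono hle' (by rw [← hgz]; exact hg1 z hz))
          have hm := ih z hz (by omega)
          rw [hgz] at hm
          exact hRmono (by omega) hm
      · -- y has a unique white in-neighbor, namely g y
        intro x hax hxR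
        by_cases hxB' : x ∈ B'
        · exact absurd (hB'R _ hxB') hxR
        · obtain ⟨z, hz, hgz⟩ := hmemB' x hxB'
          have htz : τ z ≤ τ y := by
            by_contra hgt
            push_neg at hgt
            have hm := ih z hz (by omega)
            rw [hgz] at hm
            exact hxR (hRmono (by omega) hm)
          have hax' : A (g z) y := by rw [hgz]; exact hax
          have hyz : y = z := hg3 z hz y hax' (fun hmem => (hτ2 y hy) (hmono htz hmem))
          rw [← hgz, hyz]
  have hRp : R p = univ := by
    apply eq_univ_of_forall
    intro v
    by_cases hv : v ∈ B'
    · exact hB'R p hv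
    · obtain ⟨z, hz, hgz⟩ := hmemB' v hv
      have hm := key p z hz (Nat.sub_le p (τ z))
      rw [hgz] at hm
      exact hRmono (Nat.sub_le p (τ z)) hm
  exact ⟨B', ⟨p, hRp⟩, hcard, Nat.sInf_le hRp⟩

lemma ptk_flip_le {V : Type*} [Fintype V] (A : V → V → Prop) (k : ℕ)
    (hex : ∃ B : Set V, IsZFS A B ∧ B.ncard = k) :
    (∃ B' : Set V, IsZFS (flip A) B' ∧ B'.ncard = k) ∧ ptk (flip A) k ≤ ptk A k := by
  obtain ⟨B₁, h1, h2⟩ := hex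
  have hne : {t | ∃ B : Set V, IsZFS A B ∧ B.ncard = k ∧ dpt A B = t}.Nonempty :=
    ⟨dpt A B₁, B₁, h1, h2, rfl⟩
  obtain ⟨B, hB, hcard, hdpt⟩ := Nat.sInf_mem hne
  obtain ⟨B', hZ', hcard', hle⟩ := reversal A B hB
  have hcard'' : B'.ncard = k := by rw [hcard', hcard]
  refine ⟨⟨B', hZ', hcard''⟩, ?_⟩
  calc ptk (flip A) k ≤ dpt (flip A) B' := Nat.sInf_le ⟨B', hZ', hcard'', rfl⟩
    _ ≤ dpt A B := hle
    _ = ptk A k := hdpt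

lemma exists_zfs_card {V : Type*} [Fintype V] (A : V → V → Prop) (k : ℕ)
    (hk1 : Znum A ≤ k) (hk2 : k ≤ Fintype.card V) :
    ∃ B : Set V, IsZFS A B ∧ B.ncard = k := by
  classical
  have hne : {m | ∃ B : Set V, IsZFS A B ∧ B.ncard = m}.Nonempty :=
    ⟨(univ : Set V).ncard, univ, ⟨0, rfl⟩, rfl⟩
  obtain ⟨B₀, hB₀, hc₀⟩ := Nat.sInf_mem hne
  obtain ⟨B, hsub, -, hcardB⟩ := Set.exists_subsuperset_card_eq (n := k) (subset_univ B₀)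
    (by rw [hc₀]; exact hk1)
    (by rwa [ncard_univ, Nat.card_eq_fintype_card])
  refine ⟨B, ?_, hcardB⟩
  obtain ⟨t, ht⟩ := hB₀
  exact ⟨t, univ_subset_iff.mp (ht ▸ iter_mono_set A hsub t)⟩

/-- For `Z(Γ) ≤ k ≤ n`, the `k`-propagation times of a digraph and its transpose agree. -/
theorem stmt3 {V : Type*} [Fintype V] (A : V → V → Prop) (hirr : Irreflexive A)
    (k : ℕ) (hk1 : Znum A ≤ k) (hk2 : k ≤ Fintype.card V) :
    ptk A k = ptk (flip A) k := by
  have hex := exists_zfs_card A k hk1 hk2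
  obtain ⟨hex', h1⟩ := ptk_flip_le A k hex
  obtain ⟨-, h2⟩ := ptk_flip_le (flip A) k hex'
  have hff : flip (flip A) = A := rfl
  rw [hff] at h2
  exact le_antisymm h2 h1
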